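/- Let β be a quantum root of a Kac–Moody root system and let i ∈ I index a simple root. Then r_i(β) is a quantum root if and only if |⟨β∨, α_i⟩| ≤ 1. -/

import Mathlib

structure KMD (I : Type) [Fintype I] [DecidableEq I] where
  A : I → I → ℤ
  A_diag : ∀ i, A i i = 2
  A_offdiag : ∀ i j, i ≠ j → A i j ≤ 0
  A_symm_zero : ∀ i j, A i j = 0 → A j i = 0
  X : Type
  Y : Type
  [addX : AddCommGroup X]
  [addY : AddCommGroup Y]
  P : Y →ₗ[ℤ] X →ₗ[ℤ] ℤ
  α : I → X
  αv : I → Y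
  indep_α : LinearIndependent ℤ α
  indep_αv : LinearIndependent ℤ αv
  pair_simple : ∀ i j, P (αv i) (α j) = A i j

attribute [instance] KMD.addX KMD.addY

namespace KMD

open scoped Classical

variable {I : Type} [Fintype I] [DecidableEq I] (S : KMD I)

/-- The simple reflection on `X`, as a linear map. -/
def preReflX (i : I) : S.X →ₗ[ℤ] S.X :=
  LinearMap.id - (S.P (S.αv i)).smulRight (S.α i)

lemma preReflX_apply (i : I) (x : S.X) :
    S.preReflX i x = x - S.P (S.αv i) x • S.α i := by
  simp [preReflX]

lemma preReflX_invol (i : I) : Function.Involutive (S.preReflX i) := by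
  intro x
  have h2 : S.P (S.αv i) (S.α i) = 2 := by rw [S.pair_simple i i, S.A_diag i]
  have hp : S.P (S.αv i) (x - S.P (S.αv i) x • S.α i) = -(S.P (S.αv i) x) := by
    rw [map_sub, LinearMap.map_smul, h2, smul_eq_mul]; ring
  simp only [S.preReflX_apply, hp]
  module

/-- The simple reflection `r_i` acting on `X`. -/
def reflX (i : I) : S.X ≃ₗ[ℤ] S.X :=
  { S.preReflX i with
    invFun := S.preReflX i
    left_inv := S.preReflX_invol i
    right_inv := S.preReflX_invol i }

def preReflY (i : I) : S.Y →ₗ[ℤ] S.Y :=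
  LinearMap.id - (S.P.flip (S.α i)).smulRight (S.αv i)

lemma preReflY_apply (i : I) (y : S.Y) :
    S.preReflY i y = y - S.P y (S.α i) • S.αv i := by
  simp [preReflY]

lemma preReflY_invol (i : I) : Function.Involutive (S.preReflY i) := by
  intro y
  have h2 : S.P (S.αv i) (S.α i) = 2 := by rw [S.pair_simple i i, S.A_diag i]
  have hp : S.P (y - S.P y (S.α i) • S.αv i) (S.α i) = -(S.P y (S.α i)) := by
    rw [map_sub, LinearMap.map_smul, LinearMap.sub_apply, LinearMap.smul_apply, h2,
      smul_eq_mul]; ring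
  simp only [S.preReflY_apply, hp]
  module

/-- The simple reflection `r_i` acting contragrediently on `Y`. -/
def reflY (i : I) : S.Y ≃ₗ[ℤ] S.Y :=
  { S.preReflY i with
    invFun := S.preReflY i
    left_inv := S.preReflY_invol i
    right_inv := S.preReflY_invol i }

/-- The product `r_{i_1} ⋯ r_{i_k}` of simple reflections on `X` indexed by a word. -/
def wordX (l : List I) : S.X ≃ₗ[ℤ] S.X := (l.map S.reflX).prod

def wordY (l : List I) : S.Y ≃ₗ[ℤ] S.Y := (l.map S.reflY).prod

/-- Real roots: the Weyl-group orbit of the simple roots. -/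
def IsRoot (x : S.X) : Prop := ∃ p : List I × I, x = S.wordX p.1 (S.α p.2)

def IsPosRoot (x : S.X) : Prop :=
  S.IsRoot x ∧ ∃ c : I → ℕ, x = ∑ i, (c i : ℤ) • S.α i

def IsNegRoot (x : S.X) : Prop :=
  S.IsRoot x ∧ ∃ c : I → ℕ, x = -∑ i, (c i : ℤ) • S.α i

/-- The coroot `β∨` associated to a real root `β`. -/
noncomputable def coroot (x : S.X) : S.Y :=
  if h : S.IsRoot x then S.wordY h.choose.1 (S.αv h.choose.2) else 0

/-- The reflection `s_β` associated to a real root `β`, acting on `X`. -/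
noncomputable def sReflX (x : S.X) : S.X ≃ₗ[ℤ] S.X :=
  if h : S.IsRoot x then S.wordX h.choose.1 * S.reflX h.choose.2 * (S.wordX h.choose.1)⁻¹
  else 1

/-- The reflection `s_β` acting on `Y`. -/
noncomputable def sReflY (x : S.X) : S.Y ≃ₗ[ℤ] S.Y :=
  if h : S.IsRoot x then S.wordY h.choose.1 * S.reflY h.choose.2 * (S.wordY h.choose.1)⁻¹
  else 1

/-- The inversion set `Inv(w) = {γ ∈ Φ₊ | w γ ∈ Φ₋}`. -/
def InvSet (w : S.X ≃ₗ[ℤ] S.X) : Set S.X := {γ | S.IsPosRoot γ ∧ S.IsNegRoot (w γ)}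

/-- Height of an element of the coroot lattice. -/
noncomputable def htv (y : S.Y) : ℤ :=
  if h : ∃ c : I → ℤ, y = ∑ i, c i • S.αv i then ∑ i, h.choose i else 0

/-- Coordinates of an element of the coroot lattice in the basis of simple coroots. -/
noncomputable def coeffY (y : S.Y) : I → ℤ :=
  if h : ∃ c : I → ℤ, y = ∑ i, c i • S.αv i then h.choose else 0

/-- A quantum root: a positive real root `β` with `⟨β∨, γ⟩ = 1` for every
`γ ∈ Inv(s_β) \ {β}`. -/
def IsQuantum (β : S.X) : Prop :=
  S.IsPosRoot β ∧ ∀ γ ∈ S.InvSet (S.sReflX β), γ ≠ β → S.P (S.coroot β) γ = 1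

/-- Word length with respect to the simple reflections. -/
noncomputable def len (w : S.X ≃ₗ[ℤ] S.X) : ℕ :=
  sInf {n | ∃ l : List I, l.length =  n ∧ w = S.wordX l}

/-- The Dynkin diagram of the generalized Cartan matrix, as a simple graph. -/
def dynkinGraph : SimpleGraph I where
  Adj i j := i ≠ j ∧ S.A i j ≠ 0
  symm := by
    constructor
    rintro i j ⟨hne, hz⟩
    exact ⟨hne.symm, fun h0 => hz (S.A_symm_zero j i h0)⟩
  loopless := by
    constructor
    rintro i ⟨hne, -⟩
    exact hne rfl

/-- The support `I₁(β)` of a root `β`. -/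
noncomputable def suppRoot (β : S.X) : Set I := {i | 1 ≤ S.coeffY (S.coroot β) i}

end KMD

namespace KMD

open scoped Classical

variable {I : Type} [Fintype I] [DecidableEq I] (S : KMD I)

lemma reflX_apply (i : I) (x : S.X) : S.reflX i x = x - S.P (S.αv i) x • S.α i :=
  S.preReflX_apply i x

lemma reflY_apply (i : I) (y : S.Y) : S.reflY i y = y - S.P y (S.α i) • S.αv i :=
  S.preReflY_apply i y

lemma reflX_invol (i : I) (x : S.X) : S.reflX i (S.reflX i x) = x :=
  S.preReflX_invol i x

lemma reflY_invol (i : I) (y : S.Y) : S.reflY i (S.reflY i y) = y :=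
  S.preReflY_invol i y

lemma pair_reflY_reflX (i : I) (y : S.Y) (x : S.X) :
    S.P (S.reflY i y) (S.reflX i x) = S.P y x := by
  have h2 : S.P (S.αv i) (S.α i) = 2 := by rw [S.pair_simple i i, S.A_diag i]
  simp only [reflX_apply, reflY_apply, map_sub, map_smul, LinearMap.sub_apply,
    LinearMap.smul_apply, smul_eq_mul, h2]
  ring

lemma pair_reflY (i : I) (y : S.Y) (x : S.X) :
    S.P (S.reflY i y) x = S.P y (S.reflX i x) := by
  have := S.pair_reflY_reflX i y (S.reflX i x)
  rwa [S.reflX_invol] at this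

@[simp] lemma wordX_nil (x : S.X) : S.wordX [] x = x := rfl

@[simp] lemma wordY_nil (y : S.Y) : S.wordY [] y = y := rfl

lemma wordX_cons (k : I) (l : List I) (x : S.X) :
    S.wordX (k :: l) x = S.reflX k (S.wordX l x) := rfl

lemma wordY_cons (k : I) (l : List I) (y : S.Y) :
    S.wordY (k :: l) y = S.reflY k (S.wordY l y) := rfl

lemma wordX_append (l₁ l₂ : List I) (x : S.X) :
    S.wordX (l₁ ++ l₂) x = S.wordX l₁ (S.wordX l₂ x) := by
  induction l₁ with
  | nil => rfl
  | cons a t ih => simp [List.cons_append, wordX_cons, ih]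

lemma wordY_append (l₁ l₂ : List I) (y : S.Y) :
    S.wordY (l₁ ++ l₂) y = S.wordY l₁ (S.wordY l₂ y) := by
  induction l₁ with
  | nil => rfl
  | cons a t ih => simp [List.cons_append, wordY_cons, ih]

lemma wordX_reverse (l : List I) (x : S.X) :
    S.wordX l.reverse (S.wordX l x) = x := by
  induction l generalizing x with
  | nil => rfl
  | cons a t ih =>
    rw [wordX_cons, List.reverse_cons, wordX_append]
    simp only [wordX_cons, wordX_nil, reflX_invol]
    exact ih _

lemma wordX_reverse' (l : List I) (x : S.X) :
    S.wordX l (S.wordX l.reverse x) = x := by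
  apply (S.wordX l.reverse).injective
  rw [S.wordX_reverse l (S.wordX l.reverse x)]

lemma wordY_reverse (l : List I) (y : S.Y) :
    S.wordY l.reverse (S.wordY l y) = y := by
  induction l generalizing y with
  | nil => rfl
  | cons a t ih =>
    rw [wordY_cons, List.reverse_cons, wordY_append]
    simp only [wordY_cons, wordY_nil, reflY_invol]
    exact ih _

lemma wordY_reverse' (l : List I) (y : S.Y) :
    S.wordY l (S.wordY l.reverse y) = y := by
  apply (S.wordY l.reverse).injective
  rw [S.wordY_reverse l (S.wordY l.reverse y)]

/-- Invariance of the pairing. -/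
lemma pair_word (l : List I) (y : S.Y) (x : S.X) :
    S.P (S.wordY l y) (S.wordX l x) = S.P y x := by
  induction l with
  | nil => rfl
  | cons a t ih => rw [wordX_cons, wordY_cons, pair_reflY_reflX, ih]

lemma pair_word' (l : List I) (y : S.Y) (x : S.X) :
    S.P (S.wordY l y) x = S.P y (S.wordX l.reverse x) := by
  have := S.pair_word l y (S.wordX l.reverse x)
  rwa [wordX_reverse'] at this

end KMD

namespace KMD

open scoped Classical

variable {I : Type} [Fintype I] [DecidableEq I] (S : KMD I)

/-- Lattice membership: `x` is a `ℤ`-combination of the simple roots. -/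
def latX (x : S.X) : Prop := ∃ c : I → ℤ, x = ∑ t, c t • S.α t

def latY (y : S.Y) : Prop := ∃ c : I → ℤ, y = ∑ t, c t • S.αv t

/-- Positivity (cone membership). -/
def posX (x : S.X) : Prop := ∃ c : I → ℕ, x = ∑ t, (c t : ℤ) • S.α t

lemma coords_uniqueX {c d : I → ℤ} (h : ∑ t, c t • S.α t = ∑ t, d t • S.α t) : c = d := by
  have h0 : ∑ t, (c t - d t) • S.α t = 0 := by
    simp only [sub_smul, Finset.sum_sub_distrib, h, sub_self]
  have h1 := Fintype.linearIndependent_iff.mp S.indep_α (fun t => c t - d t) h0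
  funext t; have h2 : c t - d t = 0 := h1 t; omega

lemma coords_uniqueY {c d : I → ℤ} (h : ∑ t, c t • S.αv t = ∑ t, d t • S.αv t) : c = d := by
  have h0 : ∑ t, (c t - d t) • S.αv t = 0 := by
    simp only [sub_smul, Finset.sum_sub_distrib, h, sub_self]
  have h1 := Fintype.linearIndependent_iff.mp S.indep_αv (fun t => c t - d t) h0
  funext t; have h2 : c t - d t = 0 := h1 t; omega

lemma alpha_coords (j : I) : S.α j = ∑ t, ((if t = j then 1 else 0 : ℤ)) • S.α t := by
  simp [ite_smul]

lemma alphav_coords (j : I) : S.αv j = ∑ t, ((if t = j then 1 else 0 : ℤ)) • S.αv t := by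
  simp [ite_smul]

lemma latX_alpha (j : I) : S.latX (S.α j) := ⟨_, S.alpha_coords j⟩

lemma latY_alphav (j : I) : S.latY (S.αv j) := ⟨_, S.alphav_coords j⟩

lemma latX_reflX (k : I) {x : S.X} (h : S.latX x) : S.latX (S.reflX k x) := by
  obtain ⟨c, rfl⟩ := h
  refine ⟨fun t => c t - (if t = k then ∑ s, c s * S.A k s else 0), ?_⟩
  rw [S.reflX_apply]
  have hp : S.P (S.αv k) (∑ t, c t • S.α t) = ∑ s, c s * S.A k s := by
    rw [map_sum]; congr 1; funext s
    rw [map_smul, S.pair_simple, smul_eq_mul]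
  rw [hp]
  simp only [sub_smul, Finset.sum_sub_distrib, ite_smul, zero_smul]
  simp [Finset.sum_ite_eq', sub_smul]

lemma latY_reflY (k : I) {y : S.Y} (h : S.latY y) : S.latY (S.reflY k y) := by
  obtain ⟨c, rfl⟩ := h
  refine ⟨fun t => c t - (if t = k then ∑ s, c s * S.A s k else 0), ?_⟩
  rw [S.reflY_apply]
  have hp : S.P (∑ t, c t • S.αv t) (S.α k) = ∑ s, c s * S.A s k := by
    rw [map_sum]; simp only [LinearMap.sum_apply]; congr 1; funext s
    rw [map_smul, LinearMap.smul_apply, S.pair_simple, smul_eq_mul]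
  rw [hp]
  simp only [sub_smul, Finset.sum_sub_distrib, ite_smul, zero_smul]
  simp [Finset.sum_ite_eq', sub_smul]

lemma latX_wordX (l : List I) {x : S.X} (h : S.latX x) : S.latX (S.wordX l x) := by
  induction l with
  | nil => simpa
  | cons a t ih => rw [wordX_cons]; exact S.latX_reflX a ih

lemma latY_wordY (l : List I) {y : S.Y} (h : S.latY y) : S.latY (S.wordY l y) := by
  induction l with
  | nil => simpa
  | cons a t ih => rw [wordY_cons]; exact S.latY_reflY a ih

lemma latX_root (l : List I) (j : I) : S.latX (S.wordX l (S.α j)) :=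
  S.latX_wordX l (S.latX_alpha j)

lemma latY_root (l : List I) (j : I) : S.latY (S.wordY l (S.αv j)) :=
  S.latY_wordY l (S.latY_alphav j)

lemma alpha_ne_zero (j : I) : S.α j ≠ 0 := by
  intro h
  have := S.coords_uniqueX (c := fun t => if t = j then 1 else 0) (d := fun _ => 0)
    (by rw [← S.alpha_coords j, h]; simp)
  have := congrFun this j; simp at this

lemma posX_alpha (j : I) : S.posX (S.α j) :=
  ⟨fun t => if t = j then 1 else 0, by
    simp only [Nat.cast_ite, Nat.cast_one, Nat.cast_zero]; exact S.alpha_coords j⟩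

lemma posX_add_smul {x y : S.X} (p q : ℕ) (hx : S.posX x) (hy : S.posX y) :
    S.posX ((p : ℤ) • x + (q : ℤ) • y) := by
  obtain ⟨c, rfl⟩ := hx; obtain ⟨d, rfl⟩ := hy
  refine ⟨fun t => p * c t + q * d t, ?_⟩
  rw [Finset.smul_sum, Finset.smul_sum, ← Finset.sum_add_distrib]
  congr 1; funext t; push_cast; rw [smul_smul, smul_smul, ← add_smul]

lemma posX_coords {x : S.X} (hx : S.posX x) {c : I → ℤ} (hc : x = ∑ t, c t • S.α t) :
    ∀ t, 0 ≤ c t := by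
  obtain ⟨d, hd⟩ := hx
  have := S.coords_uniqueX (hc.symm.trans hd)
  intro t; have := congrFun this t; omega

/-- A vector that is both "positive" and "negative" is zero. -/
lemma posX_neg_posX {x : S.X} (h1 : S.posX x) (h2 : S.posX (-x)) : x = 0 := by
  obtain ⟨c, hc⟩ := h1
  have h2' : -x = ∑ t, (-(c t : ℤ)) • S.α t := by
    rw [hc, ← Finset.sum_neg_distrib]; congr 1; funext t; rw [neg_smul]
  have := S.posX_coords h2 h2'
  have hz : ∀ t, (c t : ℤ) = 0 := by intro t; have := this t; omega
  rw [hc]; apply Finset.sum_eq_zero; intro t _; rw [hz t, zero_smul]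

end KMD

/-- Alternating word of length `n` starting with `i` (letters `i,j,i,j,…`). -/
def KMD.altW {I : Type} (i j : I) : ℕ → List I
  | 0 => []
  | n+1 => i :: KMD.altW j i n

namespace KMD

open scoped Classical

variable {I : Type} [Fintype I] [DecidableEq I] (S : KMD I)

/-- The flipped (transposed) Kac–Moody datum. -/
def flip : KMD I where
  A i j := S.A j i
  A_diag i := S.A_diag i
  A_offdiag i j h := S.A_offdiag j i (Ne.symm h)
  A_symm_zero i j h := S.A_symm_zero j i h
  X := S.Y
  Y := S.X
  addX := S.addY
  addY := S.addX
  P := S.P.flip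
  α := S.αv
  αv := S.α
  indep_α := S.indep_αv
  indep_αv := S.indep_α
  pair_simple i j := by simp only [LinearMap.flip_apply]; exact S.pair_simple j i

lemma flip_reflX (i : I) : S.flip.reflX i = S.reflY i := rfl

lemma flip_wordX (l : List I) : S.flip.wordX l = S.wordY l := rfl

section Braid

variable {i j : I}

lemma braid2 (hij : S.A i j = 0) (hji : S.A j i = 0) (x : S.X) :
    S.wordX (altW i j 2) x = S.wordX (altW j i 2) x := by
  show S.wordX [i,j] x = S.wordX [j,i] x
  simp only [wordX_cons, wordX_nil, reflX_apply, map_sub, map_smul, smul_eq_mul,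
    S.pair_simple, S.A_diag, hij, hji]
  module

lemma braid3 (hij : S.A i j = -1) (hji : S.A j i = -1) (x : S.X) :
    S.wordX (altW i j 3) x = S.wordX (altW j i 3) x := by
  show S.wordX [i,j,i] x = S.wordX [j,i,j] x
  simp only [wordX_cons, wordX_nil, reflX_apply, map_sub, map_smul, smul_eq_mul,
    S.pair_simple, S.A_diag, hij, hji]
  module

lemma braid4 (hij : S.A i j = -1) (hji : S.A j i = -2) (x : S.X) :
    S.wordX (altW i j 4) x = S.wordX (altW j i 4) x := by
  show S.wordX [i,j,i,j] x = S.wordX [j,i,j,i] x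
  simp only [wordX_cons, wordX_nil, reflX_apply, map_sub, map_smul, smul_eq_mul,
    S.pair_simple, S.A_diag, hij, hji]
  module

lemma braid6 (hij : S.A i j = -1) (hji : S.A j i = -3) (x : S.X) :
    S.wordX (altW i j 6) x = S.wordX (altW j i 6) x := by
  show S.wordX [i,j,i,j,i,j] x = S.wordX [j,i,j,i,j,i] x
  simp only [wordX_cons, wordX_nil, reflX_apply, map_sub, map_smul, smul_eq_mul,
    S.pair_simple, S.A_diag, hij, hji]
  module

end Braid

end KMD

namespace KMD

open scoped Classical

/-- Order of `r_i r_j` from the product of Cartan entries. -/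
def mijZ (p : ℤ) : ℕ := if p = 0 then 2 else if p = 1 then 3 else if p = 2 then 4 else 6

private lemma cartan_aux (a b : ℤ) (ha : a ≤ 0) (hb : b ≤ 0) (hz : a = 0 → b = 0)
    (hz' : b = 0 → a = 0) (hle : a * b ≤ 3) :
    (a = 0 ∧ b = 0) ∨ (a = -1 ∧ b = -1) ∨ (a = -1 ∧ b = -2) ∨ (a = -2 ∧ b = -1) ∨
    (a = -1 ∧ b = -3) ∨ (a = -3 ∧ b = -1) := by
  rcases eq_or_ne a 0 with h | h
  · exact Or.inl ⟨h, hz h⟩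
  rcases eq_or_ne b 0 with h' | h'
  · exact absurd (hz' h') h
  have ha1 : a ≤ -1 := by omega
  have hb1 : b ≤ -1 := by omega
  have hage : -3 ≤ a := by nlinarith
  have hbge : -3 ≤ b := by nlinarith
  interval_cases a <;> interval_cases b <;> revert hle <;> decide

variable {I : Type} [Fintype I] [DecidableEq I] (S : KMD I)

def mij (i j : I) : ℕ := mijZ (S.A i j * S.A j i)

lemma mij_comm (i j : I) : S.mij i j = S.mij j i := by
  unfold mij; rw [mul_comm]

lemma mij_flip (i j : I) : S.flip.mij i j = S.mij i j := by
  unfold mij; unfold flip; simp only; rw [mul_comm]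

lemma two_le_mij (i j : I) : 2 ≤ S.mij i j := by
  unfold mij mijZ
  split
  · omega
  · split
    · omega
    · split <;> omega

lemma cartan_cases (i j : I) (hne : i ≠ j) (hle : S.A i j * S.A j i ≤ 3) :
    (S.A i j = 0 ∧ S.A j i = 0 ∧ S.mij i j = 2) ∨
    (S.A i j = -1 ∧ S.A j i = -1 ∧ S.mij i j = 3) ∨
    (S.A i j = -1 ∧ S.A j i = -2 ∧ S.mij i j = 4) ∨
    (S.A i j = -2 ∧ S.A j i = -1 ∧ S.mij i j = 4) ∨
    (S.A i j = -1 ∧ S.A j i = -3 ∧ S.mij i j = 6) ∨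
    (S.A i j = -3 ∧ S.A j i = -1 ∧ S.mij i j = 6) := by
  have := cartan_aux (S.A i j) (S.A j i) (S.A_offdiag i j hne) (S.A_offdiag j i (Ne.symm hne))
    (S.A_symm_zero i j) (S.A_symm_zero j i) hle
  unfold mij mijZ
  rcases this with ⟨h1, h2⟩ | ⟨h1, h2⟩ | ⟨h1, h2⟩ | ⟨h1, h2⟩ | ⟨h1, h2⟩ | ⟨h1, h2⟩ <;>
    rw [h1, h2] <;> norm_num

/-- The braid relation, on `X`. -/
lemma braidX (i j : I) (hne : i ≠ j) (hle : S.A i j * S.A j i ≤ 3) (x : S.X) :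
    S.wordX (altW i j (S.mij i j)) x = S.wordX (altW j i (S.mij i j)) x := by
  rcases S.cartan_cases i j hne hle with ⟨h1, h2, h3⟩ | ⟨h1, h2, h3⟩ | ⟨h1, h2, h3⟩ |
    ⟨h1, h2, h3⟩ | ⟨h1, h2, h3⟩ | ⟨h1, h2, h3⟩ <;> rw [h3]
  · exact S.braid2 h1 h2 x
  · exact S.braid3 h1 h2 x
  · exact S.braid4 h1 h2 x
  · exact (S.braid4 h2 h1 x).symm
  · exact S.braid6 h1 h2 x
  · exact (S.braid6 h2 h1 x).symm

/-- The braid relation, on `Y`. -/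
lemma braidY (i j : I) (hne : i ≠ j) (hle : S.A i j * S.A j i ≤ 3) (y : S.Y) :
    S.wordY (altW i j (S.mij i j)) y = S.wordY (altW j i (S.mij i j)) y := by
  have hle' : S.flip.A i j * S.flip.A j i ≤ 3 := by
    show S.A j i * S.A i j ≤ 3; rwa [mul_comm]
  have := S.flip.braidX i j hne hle' y
  rwa [S.flip_wordX, S.flip_wordX, S.mij_flip] at this

end KMD

namespace KMD

open scoped Classical

variable {I : Type} [Fintype I] [DecidableEq I]

/-- Elementary rewriting steps on words. -/
inductive Stp (S : KMD I) : List I → List I → Prop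
  | cancel (u v : List I) (k : I) : Stp S (u ++ [k, k] ++ v) (u ++ v)
  | braid (u v : List I) (i j : I) (hne : i ≠ j) (hle : S.A i j * S.A j i ≤ 3) :
      Stp S (u ++ altW i j (S.mij i j) ++ v) (u ++ altW j i (S.mij i j) ++ v)

variable (S : KMD I)

/-- Equivalence of words. -/
def Weq (a b : List I) : Prop := Relation.ReflTransGen (fun x y => S.Stp x y ∨ S.Stp y x) a b

lemma weq_refl (a : List I) : S.Weq a a := Relation.ReflTransGen.refl

lemma weq_symm {a b : List I} (h : S.Weq a b) : S.Weq b a :=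
  by
    haveI : Std.Symm (fun x y : List I => S.Stp x y ∨ S.Stp y x) := ⟨fun _ _ hs => hs.symm⟩
    exact Relation.ReflTransGen.stdSymm.symm _ _ h

lemma weq_trans {a b c : List I} (h1 : S.Weq a b) (h2 : S.Weq b c) : S.Weq a c :=
  Relation.ReflTransGen.trans h1 h2

lemma stp_wordX_eq {a b : List I} (h : S.Stp a b) (x : S.X) : S.wordX a x = S.wordX b x := by
  cases h with
  | cancel u v k =>
    rw [wordX_append, wordX_append, wordX_append]
    congr 1
    show S.reflX k (S.reflX k (S.wordX v x)) = S.wordX v x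
    exact S.reflX_invol k _
  | braid u v i j hne hle =>
    rw [wordX_append, wordX_append, wordX_append, wordX_append, S.braidX i j hne hle]

lemma stp_wordY_eq {a b : List I} (h : S.Stp a b) (y : S.Y) : S.wordY a y = S.wordY b y := by
  cases h with
  | cancel u v k =>
    rw [wordY_append, wordY_append, wordY_append]
    congr 1
    show S.reflY k (S.reflY k (S.wordY v y)) = S.wordY v y
    exact S.reflY_invol k _
  | braid u v i j hne hle =>
    rw [wordY_append, wordY_append, wordY_append, wordY_append, S.braidY i j hne hle]

lemma weq_wordX_eq {a b : List I} (h : S.Weq a b) (x : S.X) : S.wordX a x = S.wordX b x := by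
  induction h with
  | refl => rfl
  | tail _ hs ih =>
    rcases hs with hs | hs
    · rw [ih, S.stp_wordX_eq hs]
    · rw [ih, ← S.stp_wordX_eq hs]

lemma weq_wordY_eq {a b : List I} (h : S.Weq a b) (y : S.Y) : S.wordY a y = S.wordY b y := by
  induction h with
  | refl => rfl
  | tail _ hs ih =>
    rcases hs with hs | hs
    · rw [ih, S.stp_wordY_eq hs]
    · rw [ih, ← S.stp_wordY_eq hs]

lemma stp_context {a b : List I} (h : S.Stp a b) (p q : List I) :
    S.Stp (p ++ a ++ q) (p ++ b ++ q) := by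
  cases h with
  | cancel u v k =>
    have := Stp.cancel (S := S) (p ++ u) (v ++ q) k
    simpa [List.append_assoc] using this
  | braid u v i j hne hle =>
    have := Stp.braid (S := S) (p ++ u) (v ++ q) i j hne hle
    simpa [List.append_assoc] using this

lemma weq_context {a b : List I} (h : S.Weq a b) (p q : List I) :
    S.Weq (p ++ a ++ q) (p ++ b ++ q) := by
  induction h with
  | refl => exact S.weq_refl _
  | tail _ hs ih =>
    refine S.weq_trans ih (Relation.ReflTransGen.single ?_)
    rcases hs with hs | hs
    · exact Or.inl (S.stp_context hs p q)
    · exact Or.inr (S.stp_context hs p q)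

lemma weq_append {a b c d : List I} (h1 : S.Weq a b) (h2 : S.Weq c d) :
    S.Weq (a ++ c) (b ++ d) := by
  have e1 : S.Weq (a ++ c) (b ++ c) := by
    have := S.weq_context h1 [] c; simpa using this
  have e2 : S.Weq (b ++ c) (b ++ d) := by
    have := S.weq_context h2 b []; simpa using this
  exact S.weq_trans e1 e2

lemma weq_cancel (u v : List I) (k : I) : S.Weq (u ++ [k, k] ++ v) (u ++ v) :=
  Relation.ReflTransGen.single (Or.inl (Stp.cancel u v k))

lemma weq_braid_move (u v : List I) (i j : I) (hne : i ≠ j) (hle : S.A i j * S.A j i ≤ 3) :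
    S.Weq (u ++ altW i j (S.mij i j) ++ v) (u ++ altW j i (S.mij i j) ++ v) :=
  Relation.ReflTransGen.single (Or.inl (Stp.braid u v i j hne hle))

/-- Length of a word modulo the equivalence. -/
noncomputable def ell (ω : List I) : ℕ := sInf {n | ∃ ρ, S.Weq ρ ω ∧ ρ.length = n}

lemma ell_le {ω ρ : List I} (h : S.Weq ρ ω) : S.ell ω ≤ ρ.length :=
  Nat.sInf_le ⟨ρ, h, rfl⟩

lemma ell_le_length (ω : List I) : S.ell ω ≤ ω.length := S.ell_le (S.weq_refl ω)

lemma ell_exists_min (ω : List I) : ∃ ρ, S.Weq ρ ω ∧ ρ.length = S.ell ω := by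
  have hne : {n | ∃ ρ, S.Weq ρ ω ∧ ρ.length = n}.Nonempty := ⟨ω.length, ω, S.weq_refl ω, rfl⟩
  exact Nat.sInf_mem hne

lemma ell_congr {ω ω' : List I} (h : S.Weq ω ω') : S.ell ω = S.ell ω' := by
  apply le_antisymm
  · obtain ⟨ρ, hρ, hl⟩ := S.ell_exists_min ω'
    rw [← hl]; exact S.ell_le (S.weq_trans hρ (S.weq_symm h))
  · obtain ⟨ρ, hρ, hl⟩ := S.ell_exists_min ω
    rw [← hl]; exact S.ell_le (S.weq_trans hρ h)

lemma ell_append_le (a b : List I) : S.ell (a ++ b) ≤ S.ell a + S.ell b := by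
  obtain ⟨ρ, hρ, hl⟩ := S.ell_exists_min a
  obtain ⟨σ, hσ, hm⟩ := S.ell_exists_min b
  calc S.ell (a ++ b) ≤ (ρ ++ σ).length := S.ell_le (S.weq_append hρ hσ)
  _ = S.ell a + S.ell b := by rw [List.length_append, hl, hm]

/-- Length within the dihedral subgroup. -/
noncomputable def ell2 (i j : I) (ω : List I) : ℕ :=
  sInf {n | ∃ ρ, (∀ k ∈ ρ, k = i ∨ k = j) ∧ S.Weq ρ ω ∧ ρ.length = n}

lemma ell2_le {i j : I} {ω ρ : List I} (hok : ∀ k ∈ ρ, k = i ∨ k = j) (h : S.Weq ρ ω) :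
    S.ell2 i j ω ≤ ρ.length := Nat.sInf_le ⟨ρ, hok, h, rfl⟩

lemma ell2_exists_min {i j : I} {ω : List I} (hok : ∀ k ∈ ω, k = i ∨ k = j) :
    ∃ ρ, (∀ k ∈ ρ, k = i ∨ k = j) ∧ S.Weq ρ ω ∧ ρ.length = S.ell2 i j ω := by
  have hne : {n | ∃ ρ, (∀ k ∈ ρ, k = i ∨ k = j) ∧ S.Weq ρ ω ∧ ρ.length = n}.Nonempty :=
    ⟨ω.length, ω, hok, S.weq_refl ω, rfl⟩
  exact Nat.sInf_mem hne

lemma ell_le_ell2 {i j : I} {ω : List I} (hok : ∀ k ∈ ω, k = i ∨ k = j) :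
    S.ell ω ≤ S.ell2 i j ω := by
  obtain ⟨ρ, _, hρ, hl⟩ := S.ell2_exists_min hok
  rw [← hl]; exact S.ell_le hρ

end KMD

namespace KMD

open scoped Classical

set_option linter.unusedSectionVars false

variable {I : Type} [DecidableEq I]

@[simp] lemma altW_length (i j : I) (n : ℕ) : (altW i j n).length = n := by
  induction n generalizing i j with
  | zero => rfl
  | succ n ih => simp [altW, ih]

lemma altW_mem (i j : I) (n : ℕ) : ∀ k ∈ altW i j n, k = i ∨ k = j := by
  induction n generalizing i j with
  | zero => simp [altW]
  | succ n ih =>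
    intro k hk
    rcases List.mem_cons.mp hk with h | h
    · exact Or.inl h
    · exact (ih j i k h).symm

lemma altW_add (i j : I) (m n : ℕ) :
    altW i j (m + n) =
      altW i j m ++ (if m % 2 = 0 then altW i j n else altW j i n) := by
  induction m generalizing i j with
  | zero => simp [altW]
  | succ m ih =>
    have : m + 1 + n = (m + n) + 1 := by omega
    rw [show m + 1 + n = m + n + 1 from by omega]
    show i :: altW j i (m + n) = (i :: altW j i m) ++ _
    rw [ih j i]
    rcases Nat.even_or_odd m with he | ho
    · have h1 : m % 2 = 0 := Nat.even_iff.mp he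
      have h2 : (m + 1) % 2 ≠ 0 := by omega
      simp [h1, h2]
    · have h1 : m % 2 ≠ 0 := by have := Nat.odd_iff.mp ho; omega
      have h2 : (m + 1) % 2 = 0 := by have := Nat.odd_iff.mp ho; omega
      simp [h1, h2]

lemma altW_concat (i j : I) (n : ℕ) :
    altW i j (n + 1) = altW i j n ++ [if n % 2 = 0 then i else j] := by
  rw [altW_add i j n 1]
  rcases Nat.decEq (n % 2) 0 with h | h <;> simp [h, altW]

lemma alt_struct (i j : I) : ∀ (ρ : List I) (a : I), (∀ k ∈ a :: ρ, k = i ∨ k = j) →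
    List.Chain' (· ≠ ·) (a :: ρ) → i ≠ j →
    a :: ρ = altW a (if a = i then j else i) (ρ.length + 1) := by
  intro ρ
  induction ρ with
  | nil => intro a _ _ _; simp [altW]
  | cons b t ih =>
    intro a hok hch hij
    have hab : a ≠ b := (List.isChain_cons_cons.mp hch).1
    have hcht : List.Chain' (· ≠ ·) (b :: t) := (List.isChain_cons_cons.mp hch).2
    have hokt : ∀ k ∈ b :: t, k = i ∨ k = j := fun k hk => hok k (List.mem_cons_of_mem a hk)
    have hrec := ih b hokt hcht hij
    have ha : a = i ∨ a = j := hok a (by simp)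
    have hb : b = i ∨ b = j := hok b (by simp)
    show a :: b :: t = altW a _ (t.length + 1 + 1)
    have hb' : b = (if a = i then j else i) := by
      rcases ha with h | h <;> rcases hb with h' | h' <;> simp_all
    show a :: b :: t = a :: altW (if a = i then j else i) a (t.length + 1)
    congr 1
    rw [hrec]
    rcases ha with h | h
    · have hbj : b = j := by
        rcases hb with h' | h'
        · exact absurd (h'.trans h.symm) (Ne.symm hab)
        · exact h'
      rw [hbj, h]
      simp [hij, Ne.symm hij]
    · have hbi : b = i := by
        rcases hb with h' | h'
        · exact h'
        · exact absurd (h'.trans h.symm) (Ne.symm hab)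
      rw [hbi, h]
      simp [hij, Ne.symm hij]

lemma find_duplicate : ∀ ρ : List I, ¬ List.Chain' (· ≠ ·) ρ →
    ∃ (u v : List I) (k : I), ρ = u ++ [k, k] ++ v := by
  intro ρ
  induction ρ with
  | nil => intro h; exact absurd List.isChain_nil h
  | cons a t ih =>
    intro h
    match t, ih with
    | [], _ => exact absurd (List.isChain_singleton a) h
    | b :: t', ih =>
      by_cases hab : a = b
      · exact ⟨[], t', a, by simp [hab]⟩
      · have : ¬ List.Chain' (· ≠ ·) (b :: t') := by
          intro hc; exact h (List.isChain_cons_cons.mpr ⟨hab, hc⟩)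
        obtain ⟨u, v, k, hk⟩ := ih this
        exact ⟨a :: u, v, k, by simp [hk]⟩

end KMD

namespace KMD

open scoped Classical

set_option linter.unusedSectionVars false

/-- The alternating word of length `n` *ending* with `j` (so starting letter depends
on parity). -/
def altE {I : Type} (i j : I) (n : ℕ) : List I := if n % 2 = 1 then altW j i n else altW i j n

/-- Coefficients of `wordX (altE i j n) (α i)` in terms of `α i, α j`. -/
def dihP (a b : ℤ) : ℕ → ℤ × ℤ
  | 0 => (1, 0)
  | n+1 =>
    let pq := dihP a b n
    if (n+1) % 2 = 1 then (pq.1, -b * pq.1 - pq.2) else (-a * pq.2 - pq.1, pq.2)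

variable {I : Type} [Fintype I] [DecidableEq I] (S : KMD I)

lemma altE_succ (i j : I) (n : ℕ) :
    altE i j (n + 1) = (if (n + 1) % 2 = 1 then j else i) :: altE i j n := by
  rcases Nat.even_or_odd n with h | h
  · have h1 : n % 2 = 0 := Nat.even_iff.mp h
    have h2 : (n + 1) % 2 = 1 := by omega
    simp only [altE, h2, if_pos rfl, h1]
    norm_num
    rfl
  · have h1 : n % 2 = 1 := Nat.odd_iff.mp h
    have h2 : (n + 1) % 2 = 0 := by omega
    simp only [altE, h1, h2]
    norm_num
    rfl

lemma altE_mem (i j : I) (n : ℕ) : ∀ k ∈ altE i j n, k = i ∨ k = j := by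
  unfold altE; split
  · intro k hk; exact (altW_mem j i n k hk).symm
  · exact altW_mem i j n

@[simp] lemma altE_length (i j : I) (n : ℕ) : (altE i j n).length = n := by
  unfold altE; split <;> simp

lemma reflX_combo_i (i j : I) (p q : ℤ) :
    S.reflX i (p • S.α i + q • S.α j) = (-S.A i j * q - p) • S.α i + q • S.α j := by
  rw [reflX_apply]
  have : S.P (S.αv i) (p • S.α i + q • S.α j) = 2 * p + S.A i j * q := by
    rw [map_add, map_smul, map_smul, S.pair_simple, S.pair_simple, S.A_diag]
    simp [smul_eq_mul]; ring
  rw [this]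
  module

lemma reflX_combo_j (i j : I) (p q : ℤ) :
    S.reflX j (p • S.α i + q • S.α j) = p • S.α i + (-S.A j i * p - q) • S.α j := by
  rw [reflX_apply]
  have : S.P (S.αv j) (p • S.α i + q • S.α j) = S.A j i * p + 2 * q := by
    rw [map_add, map_smul, map_smul, S.pair_simple, S.pair_simple, S.A_diag]
    simp [smul_eq_mul]; ring
  rw [this]
  module

lemma dih_eval (i j : I) (n : ℕ) :
    S.wordX (altE i j n) (S.α i) =
      (dihP (S.A i j) (S.A j i) n).1 • S.α i + (dihP (S.A i j) (S.A j i) n).2 • S.α j := by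
  induction n with
  | zero =>
    show S.α i = (1 : ℤ) • S.α i + (0 : ℤ) • S.α j
    module
  | succ n ih =>
    rw [altE_succ, wordX_cons, ih]
    by_cases h : (n + 1) % 2 = 1
    · rw [if_pos h, S.reflX_combo_j i j]
      simp only [dihP, h, if_pos]
    · rw [if_neg h, S.reflX_combo_i i j]
      simp only [dihP, h, if_neg, if_false]

end KMD

namespace KMD

open scoped Classical

set_option linter.unusedSectionVars false

lemma dih_nonneg_inf (a b : ℤ) (ha : a ≤ 0) (hb : b ≤ 0) (h4 : 4 ≤ a * b) (n : ℕ) :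
    0 ≤ (dihP a b n).1 ∧ 0 ≤ (dihP a b n).2 ∧
    (n % 2 = 0 → -b * (dihP a b n).1 ≥ 2 * (dihP a b n).2) ∧
    (n % 2 = 1 → -b * (dihP a b n).1 ≥ (dihP a b n).2 ∧
      -a * (dihP a b n).2 ≥ 2 * (dihP a b n).1) := by
  induction n with
  | zero =>
    refine ⟨by norm_num [dihP], by norm_num [dihP], ?_, ?_⟩
    · intro _; show -b * (1:ℤ) ≥ 2 * 0; linarith
    · intro h; exact absurd h (by norm_num)
  | succ n ih =>
    obtain ⟨hp, hq, hev, hod⟩ := ih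
    set p := (dihP a b n).1 with hp'
    set q := (dihP a b n).2 with hq'
    by_cases h : (n + 1) % 2 = 1
    · have hn : n % 2 = 0 := by omega
      have h1 := hev hn
      have hds : dihP a b (n + 1) = (p, -b * p - q) := by
        simp only [dihP, h, if_pos]; rfl
      rw [hds]
      refine ⟨hp, by simp only; nlinarith, ?_, ?_⟩
      · intro hcon; omega
      · intro _
        constructor
        · simp only; nlinarith
        · simp only; nlinarith
    · have hn : n % 2 = 1 := by omega
      obtain ⟨h1, h2⟩ := hod hn
      have hds : dihP a b (n + 1) = (-a * q - p, q) := by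
        simp only [dihP, h, if_neg, if_false]; rfl
      rw [hds]
      refine ⟨by simp only; nlinarith, hq, ?_, ?_⟩
      · intro _
        simp only; nlinarith
      · intro hcon; omega

variable {I : Type} [Fintype I] [DecidableEq I] (S : KMD I)

lemma dih_nonneg (i j : I) (hne : i ≠ j) (n : ℕ)
    (hfin : S.A i j * S.A j i ≤ 3 → n < S.mij i j) :
    0 ≤ (dihP (S.A i j) (S.A j i) n).1 ∧ 0 ≤ (dihP (S.A i j) (S.A j i) n).2 := by
  by_cases hle : S.A i j * S.A j i ≤ 3
  · have hn := hfin hle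
    rcases S.cartan_cases i j hne hle with ⟨h1, h2, h3⟩ | ⟨h1, h2, h3⟩ | ⟨h1, h2, h3⟩ |
      ⟨h1, h2, h3⟩ | ⟨h1, h2, h3⟩ | ⟨h1, h2, h3⟩ <;>
      rw [h3] at hn <;> rw [h1, h2] <;> interval_cases n <;> decide
  · have h4 : 4 ≤ S.A i j * S.A j i := by omega
    have := dih_nonneg_inf (S.A i j) (S.A j i) (S.A_offdiag i j hne)
      (S.A_offdiag j i (Ne.symm hne)) h4 n
    exact ⟨this.1, this.2.1⟩

end KMD

namespace KMD

open scoped Classical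

set_option linter.unusedSectionVars false

variable {I : Type} [Fintype I] [DecidableEq I] (S : KMD I)

lemma weq_concat_cancel (u : List I) (k : I) : S.Weq (u ++ [k, k]) u := by
  have := S.weq_cancel u [] k
  simpa using this

/-- Reduction of a long alternating word using one braid move. -/
lemma dihedral_reduce (x y : I) (m n : ℕ) (hm2 : 2 ≤ m) (hmn : m + 1 ≤ n)
    (hbr : S.Weq (altW x y m) (altW y x m)) :
    ∃ σ : List I, (∀ k ∈ σ, k = x ∨ k = y) ∧ S.Weq σ (altW x y n) ∧ σ.length + 2 = n := by
  set z : I := if (m - 1) % 2 = 0 then y else x with hz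
  set rest : List I := if m % 2 = 0 then altW y x (n - m - 1) else altW x y (n - m - 1)
    with hrest
  have h1 : altW x y n = altW x y m ++ (if m % 2 = 0 then altW x y (n - m)
      else altW y x (n - m)) := by
    have := altW_add x y m (n - m)
    rwa [show m + (n - m) = n from by omega] at this
  have h3 : altW y x m = altW y x (m - 1) ++ [z] := by
    have := altW_concat y x (m - 1)
    rwa [show m - 1 + 1 = m from by omega] at this
  have h4 : (if m % 2 = 0 then altW x y (n - m) else altW y x (n - m)) = z :: rest := by
    by_cases hp : m % 2 = 0
    · rw [if_pos hp, hrest, if_pos hp, hz, if_neg (by omega)]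
      rw [show n - m = (n - m - 1) + 1 from by omega]
      rfl
    · rw [if_neg hp, hrest, if_neg hp, hz, if_pos (by omega)]
      rw [show n - m = (n - m - 1) + 1 from by omega]
      rfl
  refine ⟨altW y x (m - 1) ++ rest, ?_, ?_, ?_⟩
  · intro k hk
    rcases List.mem_append.mp hk with h | h
    · exact (altW_mem y x _ k h).symm
    · rw [hrest] at h
      by_cases hp : m % 2 = 0
      · rw [if_pos hp] at h; exact (altW_mem y x _ k h).symm
      · rw [if_neg hp] at h; exact altW_mem x y _ k h
  · have e1 : S.Weq (altW y x (m - 1) ++ rest) (altW y x (m - 1) ++ [z, z] ++ rest) :=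
      S.weq_symm (S.weq_cancel _ _ z)
    have e2 : altW y x (m - 1) ++ [z, z] ++ rest = altW y x m ++ (z :: rest) := by
      rw [h3]; simp [List.append_assoc]
    have e3 : S.Weq (altW y x m ++ (z :: rest)) (altW x y n) := by
      rw [h1, ← h4]
      exact S.weq_append (S.weq_symm hbr) (S.weq_refl _)
    exact S.weq_trans e1 (e2 ▸ e3)
  · have : rest.length = n - m - 1 := by
      rw [hrest]; by_cases hp : m % 2 = 0
      · rw [if_pos hp]; simp
      · rw [if_neg hp]; simp
    simp only [List.length_append, altW_length, this]
    omega

/-- A minimal `ij`-word for `v` (such that appending `r_i` does not shorten) is the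
alternating word of length `ℓ₂(v)` ending in `j`, of length `< mij` in the finite case. -/
lemma dihedral_min_shape (i j : I) (hne : i ≠ j) (v : List I) (hok : ∀ k ∈ v, k = i ∨ k = j)
    (hyp : S.ell2 i j v ≤ S.ell2 i j (v ++ [i])) :
    S.Weq (altE i j (S.ell2 i j v)) v ∧
      (S.A i j * S.A j i ≤ 3 → S.ell2 i j v < S.mij i j) := by
  obtain ⟨ρ, hρok, hρeq, hρlen⟩ := S.ell2_exists_min hok
  set n := S.ell2 i j v with hn
  have hchain : List.Chain' (· ≠ ·) ρ := by
    by_contra hc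
    obtain ⟨u, w, k, rfl⟩ := find_duplicate ρ hc
    have hweq : S.Weq (u ++ w) v := S.weq_trans (S.weq_symm (S.weq_cancel u w k)) hρeq
    have hok' : ∀ t ∈ u ++ w, t = i ∨ t = j := by
      intro t ht
      apply hρok
      simp only [List.mem_append, List.mem_cons] at ht ⊢
      tauto
    have hle := S.ell2_le hok' hweq
    simp only [List.length_append, List.length_cons, List.length_nil] at hρlen hle
    omega
  rcases List.eq_nil_or_concat ρ with rfl | ⟨ρ₀, c, hcat⟩
  · have h0 : n = 0 := by simpa using hρlen.symm
    rw [h0]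
    exact ⟨hρeq, fun _ => by have := S.two_le_mij i j; omega⟩
  · rw [List.concat_eq_append] at hcat
    have hρne : ρ ≠ [] := by rw [hcat]; simp
    have hc : c = i ∨ c = j := by apply hρok; rw [hcat]; simp
    have hcj : c = j := by
      by_contra hcne
      have hci : c = i := by
        rcases hc with h | h
        · exact h
        · exact absurd h hcne
      rw [hci] at hcat
      have h2 : S.Weq ρ₀ (v ++ [i]) := by
        have h1 : S.Weq (ρ ++ [i]) (v ++ [i]) := S.weq_append hρeq (S.weq_refl [i])
        refine S.weq_trans ?_ h1
        rw [hcat, List.append_assoc]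
        exact S.weq_symm (S.weq_concat_cancel ρ₀ i)
      have hok0 : ∀ t ∈ ρ₀, t = i ∨ t = j := by
        intro t ht; apply hρok; rw [hcat]; simp [ht]
      have hle := S.ell2_le hok0 h2
      have hlen0 : ρ₀.length + 1 = n := by rw [← hρlen, hcat]; simp
      omega
    rw [hcj] at hcat
    obtain ⟨a, t, hat⟩ : ∃ a t, ρ = a :: t := by
      cases ρ with
      | nil => exact absurd rfl hρne
      | cons a t => exact ⟨a, t, rfl⟩
    have hstruct := alt_struct i j t a (hat ▸ hρok) (hat ▸ hchain) hne
    have hlen : t.length + 1 = n := by rw [← hρlen, hat]; simp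
    set a' := if a = i then j else i with ha'
    have hρalt : ρ = altW a a' n := by rw [hat, hstruct, hlen]
    have han : 1 ≤ n := by omega
    have hsplit : altW a a' n = altW a a' (n - 1) ++ [if (n-1) % 2 = 0 then a else a'] := by
      have := altW_concat a a' (n - 1)
      rwa [show n - 1 + 1 = n from by omega] at this
    have hz : (if (n-1) % 2 = 0 then a else a') = j := by
      have he : ρ₀ ++ [j] = altW a a' (n - 1) ++ [if (n-1) % 2 = 0 then a else a'] := by
        rw [← hcat, hρalt, hsplit]
      have hlen2 : ρ₀.length = (altW a a' (n-1)).length := by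
        have h5 : (ρ₀ ++ [j]).length = (altW a a' (n - 1) ++ [if (n-1) % 2 = 0 then a else a']).length := by
          rw [he]
        simp only [List.length_append, List.length_cons, List.length_nil, altW_length] at h5
        simp only [altW_length]
        omega
      have := (List.append_inj he hlen2).2
      simpa using this.symm
    have haij : a = i ∨ a = j := by apply hρok; rw [hat]; simp
    have hρE : ρ = altE i j n := by
      rw [hρalt]
      unfold altE
      by_cases hpar : n % 2 = 1
      · rw [if_pos hpar]
        have hpar' : (n - 1) % 2 = 0 := by omega
        rw [if_pos hpar'] at hz
        rw [hz, ha', hz, if_neg hne.symm]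
      · rw [if_neg hpar]
        have hpar' : (n - 1) % 2 ≠ 0 := by omega
        rw [if_neg hpar'] at hz
        have hai : a = i := by
          rcases haij with h | h
          · exact h
          · exfalso; rw [ha', h, if_neg hne.symm] at hz; exact hne hz
        rw [hai, ha', hai, if_pos rfl]
    refine ⟨hρE ▸ hρeq, ?_⟩
    intro hfin
    by_contra hbig
    push_neg at hbig
    set m := S.mij i j with hm
    have hm2 : 2 ≤ m := S.two_le_mij i j
    have hfin' : S.A j i * S.A i j ≤ 3 := by rwa [mul_comm]
    have hbr1 : S.Weq (altW i j m) (altW j i m) := by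
      have := S.weq_braid_move [] [] i j hne hfin
      simpa using this
    have hbr2 : S.Weq (altW j i m) (altW i j m) := by
      have := S.weq_braid_move [] [] j i hne.symm hfin'
      rw [S.mij_comm j i] at this
      simpa using this
    have hvalt : S.Weq (altE i j n) v := hρE ▸ hρeq
    rcases Nat.lt_or_ge n (m + 1) with hnm | hgt
    · -- n = m
      have hnm' : n = m := by omega
      rw [hnm'] at hvalt
      by_cases hpar : m % 2 = 1
      · -- altE i j m = altW j i m, flip to altW i j m which ends in i
        have hE : altE i j m = altW j i m := by unfold altE; rw [if_pos hpar]
        rw [hE] at hvalt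
        have hv2 : S.Weq (altW i j m ++ [i]) (v ++ [i]) :=
          S.weq_append (S.weq_trans hbr1 hvalt) (S.weq_refl [i])
        have hend : altW i j m = altW i j (m - 1) ++ [i] := by
          have := altW_concat i j (m - 1)
          rw [show m - 1 + 1 = m from by omega] at this
          rwa [if_pos (by omega)] at this
        have hv3 : S.Weq (altW i j (m - 1)) (v ++ [i]) := by
          refine S.weq_trans ?_ hv2
          rw [hend, List.append_assoc]
          exact S.weq_symm (S.weq_concat_cancel _ i)
        have hle := S.ell2_le (fun k hk => altW_mem i j _ k hk) hv3
        simp only [altW_length] at hle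
        omega
      · have hE : altE i j m = altW i j m := by unfold altE; rw [if_neg hpar]
        rw [hE] at hvalt
        have hv2 : S.Weq (altW j i m ++ [i]) (v ++ [i]) :=
          S.weq_append (S.weq_trans hbr2 hvalt) (S.weq_refl [i])
        have hend : altW j i m = altW j i (m - 1) ++ [i] := by
          have := altW_concat j i (m - 1)
          rw [show m - 1 + 1 = m from by omega] at this
          rwa [if_neg (by omega)] at this
        have hv3 : S.Weq (altW j i (m - 1)) (v ++ [i]) := by
          refine S.weq_trans ?_ hv2
          rw [hend, List.append_assoc]
          exact S.weq_symm (S.weq_concat_cancel _ i)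
        have hle := S.ell2_le (fun k hk => (altW_mem j i _ k hk).symm) hv3
        simp only [altW_length] at hle
        omega
    · -- n ≥ m + 1 : reduce using a braid move
      by_cases hpar : n % 2 = 1
      · have hE : altE i j n = altW j i n := by unfold altE; rw [if_pos hpar]
        obtain ⟨σ, hσok, hσeq, hσlen⟩ := S.dihedral_reduce j i m n hm2 hgt hbr2
        have hσv : S.Weq σ v := S.weq_trans hσeq (hE ▸ hvalt)
        have hle := S.ell2_le (fun k hk => (hσok k hk).symm) hσv
        omega
      · have hE : altE i j n = altW i j n := by unfold altE; rw [if_neg hpar]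
        obtain ⟨σ, hσok, hσeq, hσlen⟩ := S.dihedral_reduce i j m n hm2 hgt hbr1
        have hσv : S.Weq σ v := S.weq_trans hσeq (hE ▸ hvalt)
        have hle := S.ell2_le hσok hσv
        omega

/-- The dihedral positivity lemma. -/
lemma dihedral (i j : I) (hne : i ≠ j) (v : List I) (hok : ∀ k ∈ v, k = i ∨ k = j)
    (hyp : S.ell2 i j v ≤ S.ell2 i j (v ++ [i])) :
    ∃ p q : ℕ, S.wordX v (S.α i) = (p : ℤ) • S.α i + (q : ℤ) • S.α j := by
  obtain ⟨hweq, hbound⟩ := S.dihedral_min_shape i j hne v hok hyp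
  have heval := S.dih_eval i j (S.ell2 i j v)
  have hnn := S.dih_nonneg i j hne (S.ell2 i j v) hbound
  refine ⟨(dihP (S.A i j) (S.A j i) (S.ell2 i j v)).1.toNat,
    (dihP (S.A i j) (S.A j i) (S.ell2 i j v)).2.toNat, ?_⟩
  rw [← S.weq_wordX_eq hweq (S.α i), heval, Int.toNat_of_nonneg hnn.1,
    Int.toNat_of_nonneg hnn.2]

end KMD

namespace KMD

open scoped Classical

set_option linter.unusedSectionVars false

variable {I : Type} [Fintype I] [DecidableEq I] (S : KMD I)

lemma ell2_cons_le {i j : I} {w : List I} (hok : ∀ k ∈ w, k = i ∨ k = j) (c : I)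
    (hc : c = i ∨ c = j) : S.ell2 i j (c :: w) ≤ S.ell2 i j w + 1 := by
  obtain ⟨ρ, hρok, hρeq, hρl⟩ := S.ell2_exists_min hok
  have hok' : ∀ k ∈ c :: ρ, k = i ∨ k = j := by
    intro k hk
    rcases List.mem_cons.mp hk with h | h
    · rw [h]; exact hc
    · exact hρok k h
  have hweq : S.Weq (c :: ρ) (c :: w) := by
    have := S.weq_context hρeq [c] []
    simpa using this
  have := S.ell2_le hok' hweq
  simp only [List.length_cons] at this
  omega

/-- Humphreys-style theorem: if appending `r_i` does not shorten `ω`, then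
`wordX ω (α i)` is a nonnegative combination of simple roots. -/
lemma mainT : ∀ (n : ℕ) (ω : List I) (i : I), S.ell ω = n →
    S.ell ω ≤ S.ell (ω ++ [i]) → S.posX (S.wordX ω (S.α i)) := by
  intro n
  induction n using Nat.strong_induction_on with
  | _ n IH =>
  intro ω i hℓ hge
  rcases Nat.eq_zero_or_pos n with h0 | hpos
  · -- length 0 : ω is trivial
    obtain ⟨ρ, hρ, hρl⟩ := S.ell_exists_min ω
    rw [hℓ, h0] at hρl
    have hρnil : ρ = [] := List.length_eq_zero_iff.mp hρl
    subst hρnil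
    have : S.wordX ω (S.α i) = S.α i := by
      rw [← S.weq_wordX_eq hρ]; rfl
    rw [this]
    exact S.posX_alpha i
  · obtain ⟨ρ, hρ, hρl⟩ := S.ell_exists_min ω
    rw [hℓ] at hρl
    rcases List.eq_nil_or_concat ρ with rfl | ⟨ρ₀, j, hcat⟩
    · simp at hρl; omega
    rw [List.concat_eq_append] at hcat
    -- appending j shortens
    have hj : S.ell (ω ++ [j]) < n := by
      have h1 : S.Weq ρ₀ (ω ++ [j]) := by
        have e1 : S.Weq (ρ ++ [j]) (ω ++ [j]) := S.weq_append hρ (S.weq_refl [j])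
        refine S.weq_trans ?_ e1
        rw [hcat, List.append_assoc]
        exact S.weq_symm (S.weq_concat_cancel ρ₀ j)
      have h2 := S.ell_le h1
      have h3 : ρ₀.length + 1 = n := by rw [← hρl, hcat]; simp
      omega
    have hij : i ≠ j := by
      intro h
      rw [h] at hge
      omega
    -- the coset minimization
    set T : Set ℕ := {k | ∃ u w, (∀ t ∈ w, t = i ∨ t = j) ∧ S.Weq (u ++ w) ω ∧
      S.ell u + S.ell2 i j w ≤ n ∧ S.ell u = k} with hT
    have hTne : T.Nonempty := by
      refine ⟨S.ell ω, ω, [], by simp, by simpa using S.weq_refl ω, ?_, rfl⟩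
      have h2 : S.ell2 i j ([] : List I) = 0 := by
        have := S.ell2_le (i := i) (j := j) (ω := ([] : List I)) (ρ := []) (by simp)
          (S.weq_refl [])
        simpa using this
      rw [h2, hℓ]
      omega
    obtain ⟨u, w, hwok, hweq, hsum, huk⟩ := Nat.sInf_mem hTne
    -- general lower bound
    have hgen : n ≤ S.ell u + S.ell2 i j w := by
      obtain ⟨ρu, hρu, hρul⟩ := S.ell_exists_min u
      obtain ⟨ρw, hρwok, hρw, hρwl⟩ := S.ell2_exists_min hwok
      have : S.Weq (ρu ++ ρw) ω := S.weq_trans (S.weq_append hρu hρw) hweq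
      have := S.ell_le this
      rw [hℓ] at this
      simp only [List.length_append] at this
      omega
    -- minimality of ℓ(u) within T
    have hmin : ∀ k ∈ T, S.ell u ≤ k := fun k hk => huk ▸ Nat.sInf_le hk
    -- appending i or j to u does not shorten it
    have hCu : ∀ c, c = i ∨ c = j → S.ell u ≤ S.ell (u ++ [c]) := by
      intro c hc
      by_contra hlt
      push_neg at hlt
      have hmem : S.ell (u ++ [c]) ∈ T := by
        refine ⟨u ++ [c], c :: w, ?_, ?_, ?_, rfl⟩
        · intro t ht
          rcases List.mem_cons.mp ht with h | h
          · rw [h]; exact hc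
          · exact hwok t h
        · have he : u ++ [c] ++ (c :: w) = u ++ [c, c] ++ w := by simp
          rw [he]
          exact S.weq_trans (S.weq_cancel u w c) hweq
        · have := S.ell2_cons_le hwok c hc
          omega
      have := hmin _ hmem
      omega
    -- w is nontrivial
    have hw1 : 1 ≤ S.ell2 i j w := by
      by_contra h0'
      push_neg at h0'
      have h0'' : S.ell2 i j w = 0 := by omega
      obtain ⟨ρw, hρwok, hρw, hρwl⟩ := S.ell2_exists_min hwok
      rw [h0''] at hρwl
      have : ρw = [] := List.length_eq_zero_iff.mp hρwl
      subst this
      have huω : S.Weq u ω := by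
        refine S.weq_trans ?_ hweq
        have := S.weq_append (S.weq_refl u) hρw
        simpa using this
      have h1 : S.ell (ω ++ [j]) = S.ell (u ++ [j]) :=
        (S.ell_congr (S.weq_append huω (S.weq_refl [j]))).symm
      have h2 := hCu j (Or.inr rfl)
      have h3 : S.ell u = n := by
        have := S.ell_congr huω
        rw [hℓ] at this; exact this
      omega
    have hulen : S.ell u < n := by omega
    -- induction hypothesis applied to u
    have hui : S.posX (S.wordX u (S.α i)) :=
      IH (S.ell u) hulen u i rfl (hCu i (Or.inl rfl))
    have huj : S.posX (S.wordX u (S.α j)) :=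
      IH (S.ell u) hulen u j rfl (hCu j (Or.inr rfl))
    -- the dihedral hypothesis for w
    have hwhyp : S.ell2 i j w ≤ S.ell2 i j (w ++ [i]) := by
      by_contra hlt
      push_neg at hlt
      have hokwi : ∀ k ∈ w ++ [i], k = i ∨ k = j := by
        intro k hk
        rcases List.mem_append.mp hk with h | h
        · exact hwok k h
        · simp at h; exact Or.inl h
      obtain ⟨ρ', hρ'ok, hρ', hρ'l⟩ := S.ell2_exists_min hokwi
      obtain ⟨ρu, hρu, hρul⟩ := S.ell_exists_min u
      have e1 : S.Weq (ρu ++ ρ') (ω ++ [i]) := by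
        refine S.weq_trans (S.weq_append hρu hρ') ?_
        have e2 : S.Weq (u ++ (w ++ [i])) (ω ++ [i]) := by
          have := S.weq_append hweq (S.weq_refl [i])
          simpa [List.append_assoc] using this
        exact e2
      have := S.ell_le e1
      rw [hℓ] at hge
      simp only [List.length_append, hρul, hρ'l] at this
      omega
    obtain ⟨p, q, hpq⟩ := S.dihedral i j hij w hwok hwhyp
    -- conclude
    have hfinal : S.wordX ω (S.α i) =
        (p : ℤ) • S.wordX u (S.α i) + (q : ℤ) • S.wordX u (S.α j) := by
      rw [← S.weq_wordX_eq hweq, S.wordX_append, hpq, map_add, map_smul, map_smul]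
    rw [hfinal]
    exact S.posX_add_smul p q hui huj

end KMD

namespace KMD

open scoped Classical

set_option linter.unusedSectionVars false

variable {I : Type} [Fintype I] [DecidableEq I] (S : KMD I)

lemma reflX_alpha_self (k : I) : S.reflX k (S.α k) = -S.α k := by
  rw [reflX_apply, S.pair_simple, S.A_diag]
  module

lemma reflY_alphav_self (k : I) : S.reflY k (S.αv k) = -S.αv k := by
  rw [reflY_apply, S.pair_simple, S.A_diag]
  module

/-- Dichotomy: every real root is positive or negative. -/
lemma pos_or_neg (ω : List I) (t : I) :
    S.posX (S.wordX ω (S.α t)) ∨ S.posX (-(S.wordX ω (S.α t))) := by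
  rcases le_or_gt (S.ell ω) (S.ell (ω ++ [t])) with h | h
  · exact Or.inl (S.mainT (S.ell ω) ω t rfl h)
  · right
    have h1 : S.ell (ω ++ [t]) ≤ S.ell ((ω ++ [t]) ++ [t]) := by
      have e1 : S.Weq ((ω ++ [t]) ++ [t]) ω := by
        rw [List.append_assoc]
        exact S.weq_concat_cancel ω t
      rw [S.ell_congr e1]
      omega
    have h2 := S.mainT (S.ell (ω ++ [t])) (ω ++ [t]) t rfl h1
    have h3 : S.wordX (ω ++ [t]) (S.α t) = -(S.wordX ω (S.α t)) := by
      rw [S.wordX_append]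
      show S.wordX ω (S.wordX [t] (S.α t)) = _
      have : S.wordX [t] (S.α t) = -S.α t := S.reflX_alpha_self t
      rw [this, map_neg]
    rwa [h3] at h2

/-- If a word acts trivially on all simple roots, it acts trivially on all simple coroots. -/
lemma word_id_transfer (ω : List I) (hfix : ∀ t, S.wordX ω (S.α t) = S.α t) :
    ∀ t, S.wordY ω (S.αv t) = S.αv t := by
  obtain ⟨ρ, hρ, hρl⟩ := S.ell_exists_min ω
  rcases List.eq_nil_or_concat ρ with rfl | ⟨ρ₀, k, hcat⟩
  · intro t
    rw [← S.weq_wordY_eq hρ]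
    rfl
  · exfalso
    rw [List.concat_eq_append] at hcat
    -- ρ₀ followed by k has maximal length, so wordX ρ₀ (α k) is positive
    have h1 : S.ell ρ₀ ≤ S.ell (ρ₀ ++ [k]) := by
      have e1 : S.ell (ρ₀ ++ [k]) = S.ell ω := by
        rw [← hcat]; exact S.ell_congr hρ
      have e2 : S.ell ρ₀ ≤ ρ₀.length := S.ell_le_length ρ₀
      have e3 : ρ₀.length + 1 = S.ell ω := by rw [← hρl, hcat]; simp
      omega
    have h2 := S.mainT (S.ell ρ₀) ρ₀ k rfl h1
    have h3 : S.wordX ρ (S.α k) = -(S.wordX ρ₀ (S.α k)) := by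
      rw [hcat, S.wordX_append]
      show S.wordX ρ₀ (S.wordX [k] (S.α k)) = _
      have : S.wordX [k] (S.α k) = -S.α k := S.reflX_alpha_self k
      rw [this, map_neg]
    have h4 : S.wordX ρ (S.α k) = S.α k := by
      rw [S.weq_wordX_eq hρ]; exact hfix k
    have h5 : S.posX (-(S.α k)) := by
      rw [← h4, h3]
      rwa [neg_neg]
    have h6 := S.posX_neg_posX (S.posX_alpha k) h5
    exact S.alpha_ne_zero k h6

/-- Two-term coordinates. -/
lemma two_coords (t k : I) (hne : t ≠ k) (m : ℤ) :
    S.α t - m • S.α k = ∑ s, ((if s = t then 1 else 0) + (if s = k then -m else 0)) • S.α s := by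
  simp only [add_smul, Finset.sum_add_distrib, ite_smul, zero_smul, one_smul, neg_smul,
    Finset.sum_ite_eq', Finset.mem_univ, if_true]
  rw [sub_eq_add_neg]

lemma neg_coords {x : S.X} {c : I → ℤ} (h : x = ∑ s, c s • S.α s) :
    -x = ∑ s, (-(c s)) • S.α s := by
  rw [h, ← Finset.sum_neg_distrib]
  congr 1
  funext s
  rw [neg_smul]

lemma coeff_le_zero (t k : I) (hne : t ≠ k) (mz : ℤ)
    (h : S.posX (S.α t - mz • S.α k) ∨ S.posX (-(S.α t - mz • S.α k))) : mz ≤ 0 := by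
  rcases h with h | h
  · have := S.posX_coords h (S.two_coords t k hne mz)
    have hk := this k
    rw [if_neg (Ne.symm hne), if_pos rfl] at hk
    omega
  · have hc := S.neg_coords (S.two_coords t k hne mz)
    have := S.posX_coords h hc
    have ht := this t
    rw [if_pos rfl, if_neg hne] at ht
    omega

lemma coeff_vanish (t k : I) (hne : t ≠ k) (m : ℤ)
    (h1 : S.posX (S.α t - m • S.α k) ∨ S.posX (-(S.α t - m • S.α k)))
    (h2 : S.posX (S.α t + m • S.α k) ∨ S.posX (-(S.α t + m • S.α k))) : m = 0 := by
  have hm1 := S.coeff_le_zero t k hne m h1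
  have hm2 : -m ≤ 0 := by
    apply S.coeff_le_zero t k hne
    rwa [neg_smul, sub_neg_eq_add]
  omega

end KMD

namespace KMD

open scoped Classical

set_option linter.unusedSectionVars false

variable {I : Type} [Fintype I] [DecidableEq I] (S : KMD I)

lemma flip_wordY (l : List I) : S.flip.wordY l = S.wordX l := rfl

lemma conj_formula (ω : List I) (j : I) (x : S.X) :
    S.wordX (ω ++ [j] ++ ω.reverse) x =
      x - S.P (S.wordY ω (S.αv j)) x • S.wordX ω (S.α j) := by
  rw [S.wordX_append (ω ++ [j]) ω.reverse, S.wordX_append ω [j]]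
  have h1 : S.wordX [j] (S.wordX ω.reverse x) =
      S.wordX ω.reverse x - S.P (S.αv j) (S.wordX ω.reverse x) • S.α j := by
    show S.reflX j (S.wordX ω.reverse x) = _
    exact S.reflX_apply j _
  rw [h1, map_sub, map_smul, S.wordX_reverse', S.pair_word']

lemma conj_formula_Y (ω : List I) (j : I) (y : S.Y) :
    S.wordY (ω ++ [j] ++ ω.reverse) y =
      y - S.P y (S.wordX ω (S.α j)) • S.wordY ω (S.αv j) := by
  have h := S.flip.conj_formula ω j y
  rw [S.flip_wordX] at h
  exact h

/-- The key uniqueness lemma: if `wordX ω (α j) = d • α k` with `d ≥ 1`, then `d = 1`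
and `wordY ω (αv j) = αv k`. -/
lemma coroot_key (ω : List I) (j k : I) (d : ℤ) (hd : 1 ≤ d)
    (hw : S.wordX ω (S.α j) = d • S.α k) :
    S.wordY ω (S.αv j) = S.αv k ∧ d = 1 := by
  set c := S.wordY ω (S.αv j) with hc
  set τ := S.P c (S.α k) with hτdef
  have hτ : d * τ = 2 := by
    have h1 : S.P c (S.wordX ω (S.α j)) = 2 := by
      rw [hc, S.pair_word ω (S.αv j) (S.α j), S.pair_simple, S.A_diag]
    rw [hw, map_smul, smul_eq_mul] at h1
    rw [hτdef]
    exact h1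
  set e := d • c - S.αv k with he
  have hPe : ∀ x : S.X, S.P e x = d * S.P c x - S.P (S.αv k) x := by
    intro x
    rw [he, map_sub, LinearMap.sub_apply, map_smul, LinearMap.smul_apply, smul_eq_mul]
  have hPek : S.P e (S.α k) = 0 := by
    rw [hPe, ← hτdef, S.pair_simple, S.A_diag, hτ]
    ring
  set W := ω ++ [j] ++ ω.reverse ++ [k] with hW
  have hWx : ∀ x : S.X, S.wordX W x = x - S.P e x • S.α k := by
    intro x
    rw [hW, S.wordX_append (ω ++ [j] ++ ω.reverse) [k]]
    have h2 : S.wordX [k] x = x - S.P (S.αv k) x • S.α k := by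
      show S.reflX k x = _; exact S.reflX_apply k x
    rw [h2, S.conj_formula, hw]
    have h3 : S.P c (x - S.P (S.αv k) x • S.α k) = S.P c x - S.P (S.αv k) x * τ := by
      rw [map_sub, map_smul, smul_eq_mul, hτdef]
    rw [h3, hPe]
    have h4 : (S.P c x - S.P (S.αv k) x * τ) • (d • S.α k) =
        (d * S.P c x - 2 * S.P (S.αv k) x) • S.α k := by
      rw [smul_smul]
      congr 1
      have h5 : (S.P c x - S.P (S.αv k) x * τ) * d
          = d * S.P c x - S.P (S.αv k) x * (d * τ) := by ring
      rw [h5, hτ]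
      ring
    rw [h4]
    module
  have hWrev : ∀ z : S.X, S.wordX W.reverse z = z + S.P e z • S.α k := by
    intro z
    have h6 : S.wordX W (z + S.P e z • S.α k) = z := by
      rw [hWx, map_add, map_smul, hPek, smul_eq_mul, mul_zero, add_zero]
      module
    have h7 := congrArg (S.wordX W.reverse) h6
    rw [S.wordX_reverse] at h7
    exact h7.symm
  have hPet : ∀ t, S.P e (S.α t) = 0 := by
    intro t
    by_cases htk : t = k
    · rw [htk]; exact hPek
    · set m := S.P e (S.α t) with hm
      have hd1 := S.pos_or_neg W t
      rw [hWx (S.α t), ← hm] at hd1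
      have hd2 := S.pos_or_neg W.reverse t
      rw [hWrev (S.α t), ← hm] at hd2
      have hd2' : S.posX (S.α t - (-m) • S.α k) ∨ S.posX (-(S.α t - (-m) • S.α k)) := by
        rwa [neg_smul, sub_neg_eq_add]
      have := S.coeff_vanish t k htk m hd1
      apply this
      rwa [neg_smul, sub_neg_eq_add] at hd2'
  have hfix : ∀ t, S.wordX W (S.α t) = S.α t := by
    intro t
    rw [hWx, hPet, zero_smul, sub_zero]
  have htrans := S.word_id_transfer W hfix k
  -- compute the Y side
  have hYW : S.wordY W (S.αv k) = -S.αv k + (2 * d) • c := by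
    rw [hW, S.wordY_append (ω ++ [j] ++ ω.reverse) [k]]
    have h7 : S.wordY [k] (S.αv k) = -S.αv k := by
      show S.reflY k (S.αv k) = _; exact S.reflY_alphav_self k
    rw [h7, S.conj_formula_Y, hw, ← hc]
    have h8 : S.P (-S.αv k) (d • S.α k) = -(2 * d) := by
      rw [map_neg, LinearMap.neg_apply, map_smul, smul_eq_mul, S.pair_simple, S.A_diag]
      ring
    rw [h8]
    module
  rw [hYW] at htrans
  -- 2 • (d • c - αv k) = 0
  have h8 : (2 : ℤ) • e = 0 := by
    rw [he, smul_sub, smul_smul]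
    calc (2 * d) • c - (2 : ℤ) • S.αv k = (-S.αv k + (2 * d) • c) - S.αv k := by module
    _ = S.αv k - S.αv k := by rw [htrans]
    _ = 0 := sub_self _
  -- coordinates
  obtain ⟨y, hy⟩ := S.latY_root ω j
  rw [← hc] at hy
  have hecoords : e = ∑ t, (d * y t - (if t = k then 1 else 0)) • S.αv t := by
    rw [he, hy, S.alphav_coords k, Finset.smul_sum, ← Finset.sum_sub_distrib]
    congr 1
    funext t
    rw [smul_smul, ← sub_smul]
  have h9 : (2 : ℤ) • e = ∑ t, (2 * (d * y t - (if t = k then 1 else 0))) • S.αv t := by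
    rw [hecoords, Finset.smul_sum]
    congr 1
    funext t
    rw [smul_smul]
  have h10 : ∀ t, 2 * (d * y t - (if t = k then 1 else 0)) = 0 := by
    have h11 : ∑ t, (2 * (d * y t - (if t = k then 1 else 0))) • S.αv t =
        ∑ t, (0 : ℤ) • S.αv t := by
      rw [← h9, h8]
      simp
    have := S.coords_uniqueY h11
    intro t; exact congrFun this t
  have hdy : ∀ t, d * y t = (if t = k then 1 else 0) := by
    intro t; have := h10 t; omega
  have hd1 : d = 1 := by
    have := hdy k
    rw [if_pos rfl] at this
    rcases Int.eq_one_or_neg_one_of_mul_eq_one' this with ⟨h, _⟩ | ⟨h, _⟩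
    · exact h
    · omega
  refine ⟨?_, hd1⟩
  show c = S.αv k
  rw [hy, S.alphav_coords k]
  congr 1
  funext t
  have := hdy t
  rw [hd1, one_mul] at this
  rw [this]

end KMD

namespace KMD

open scoped Classical

set_option linter.unusedSectionVars false
set_option linter.unusedVariables false

variable {I : Type} [Fintype I] [DecidableEq I] (S : KMD I)

lemma wordX_inv_apply (l : List I) (x : S.X) : (S.wordX l)⁻¹ x = S.wordX l.reverse x := by
  apply (S.wordX l).injective
  rw [S.wordX_reverse' l x]
  exact (S.wordX l).apply_symm_apply x

/-- Well-definedness of the coroot. -/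
lemma coroot_welldef {l l' : List I} {j j' : I}
    (h : S.wordX l (S.α j) = S.wordX l' (S.α j')) :
    S.wordY l (S.αv j) = S.wordY l' (S.αv j') := by
  have h1 : S.wordX (l'.reverse ++ l) (S.α j) = (1 : ℤ) • S.α j' := by
    rw [S.wordX_append, h, one_smul]
    exact S.wordX_reverse l' (S.α j')
  have h2 := (S.coroot_key (l'.reverse ++ l) j j' 1 le_rfl h1).1
  rw [S.wordY_append] at h2
  have := congrArg (S.wordY l') h2
  rwa [S.wordY_reverse' l'] at this

/-- No root is a proper multiple of a simple root. -/
lemma root_multiple {l : List I} {j k : I} {d : ℤ} (hd : 1 ≤ d)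
    (h : S.wordX l (S.α j) = d • S.α k) : d = 1 :=
  (S.coroot_key l j k d hd h).2

lemma isRoot_word (l : List I) (j : I) : S.IsRoot (S.wordX l (S.α j)) := ⟨(l, j), rfl⟩

lemma isRoot_alpha (j : I) : S.IsRoot (S.α j) := ⟨([], j), rfl⟩

lemma isRoot_reflX (i : I) {β : S.X} (h : S.IsRoot β) : S.IsRoot (S.reflX i β) := by
  obtain ⟨⟨l, j⟩, rfl⟩ := h
  exact ⟨(i :: l, j), rfl⟩

lemma isRoot_neg {β : S.X} (h : S.IsRoot β) : S.IsRoot (-β) := by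
  obtain ⟨⟨l, j⟩, rfl⟩ := h
  refine ⟨(l ++ [j], j), ?_⟩
  simp only
  rw [S.wordX_append]
  show _ = S.wordX l (S.reflX j (S.α j))
  rw [S.reflX_alpha_self, map_neg]

lemma root_nonzero {β : S.X} (h : S.IsRoot β) : β ≠ 0 := by
  obtain ⟨⟨l, j⟩, rfl⟩ := h
  intro h0
  have := congrArg (S.wordX l.reverse) h0
  rw [S.wordX_reverse, map_zero] at this
  exact S.alpha_ne_zero j this

/-- For any expression of a root, the coroot is the corresponding word applied to the
simple coroot. -/
lemma coroot_eq {β : S.X} (hR : S.IsRoot β) {l : List I} {j : I}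
    (h : β = S.wordX l (S.α j)) : S.coroot β = S.wordY l (S.αv j) := by
  rw [coroot, dif_pos hR]
  exact S.coroot_welldef (hR.choose_spec.symm.trans h)

lemma coroot_pair_self {β : S.X} (hR : S.IsRoot β) : S.P (S.coroot β) β = 2 := by
  obtain ⟨⟨l, j⟩, h⟩ := id hR
  rw [S.coroot_eq hR h, h, S.pair_word, S.pair_simple, S.A_diag]

lemma sReflX_apply {β : S.X} (hR : S.IsRoot β) (x : S.X) :
    S.sReflX β x = x - S.P (S.coroot β) x • β := by
  have hspec : β = S.wordX hR.choose.1 (S.α hR.choose.2) := hR.choose_spec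
  rw [sReflX, dif_pos hR]
  have h1 : (S.wordX hR.choose.1 * S.reflX hR.choose.2 * (S.wordX hR.choose.1)⁻¹) x
      = S.wordX hR.choose.1 (S.reflX hR.choose.2 (S.wordX hR.choose.1.reverse x)) := by
    rw [← S.wordX_inv_apply]
    rfl
  rw [h1]
  have h2 := S.conj_formula hR.choose.1 hR.choose.2 x
  rw [S.wordX_append (hR.choose.1 ++ [hR.choose.2]) hR.choose.1.reverse,
      S.wordX_append hR.choose.1 [hR.choose.2]] at h2
  have h3 : S.wordX [hR.choose.2] (S.wordX hR.choose.1.reverse x)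
      = S.reflX hR.choose.2 (S.wordX hR.choose.1.reverse x) := rfl
  rw [h3] at h2
  rw [h2, ← hspec, S.coroot_eq hR hspec]

lemma sReflX_self {β : S.X} (hR : S.IsRoot β) : S.sReflX β β = -β := by
  rw [S.sReflX_apply hR, S.coroot_pair_self hR]
  module

/-- Positivity decompositions of roots. -/
lemma isPosRoot_iff {β : S.X} : S.IsPosRoot β ↔ S.IsRoot β ∧ S.posX β := Iff.rfl

lemma isNegRoot_iff {β : S.X} : S.IsNegRoot β ↔ S.IsRoot β ∧ S.posX (-β) := by
  unfold IsNegRoot posX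
  constructor
  · rintro ⟨h1, c, h2⟩
    exact ⟨h1, c, by rw [h2, neg_neg]⟩
  · rintro ⟨h1, c, h2⟩
    refine ⟨h1, c, ?_⟩
    rw [← h2, neg_neg]

lemma root_pos_or_neg {β : S.X} (hR : S.IsRoot β) : S.posX β ∨ S.posX (-β) := by
  obtain ⟨⟨l, j⟩, rfl⟩ := hR
  exact S.pos_or_neg l j

lemma not_pos_and_neg {β : S.X} (hR : S.IsRoot β) (h1 : S.posX β) (h2 : S.posX (-β)) : False :=
  S.root_nonzero hR (S.posX_neg_posX h1 h2)

/-- A positive root proportional to `α k` is `α k`. -/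
lemma pos_root_alpha {β : S.X} (hR : S.IsRoot β) {d : ℤ} (hd : 1 ≤ d)
    (h : β = d • S.α k) : β = S.α k := by
  obtain ⟨⟨l, j⟩, rfl⟩ := hR
  have := S.root_multiple hd h
  rw [h, this, one_smul]

end KMD

namespace KMD

open scoped Classical

set_option linter.unusedSectionVars false
set_option linter.unusedVariables false

variable {I : Type} [Fintype I] [DecidableEq I] (S : KMD I)

lemma posX_of_coords {x : S.X} {C : I → ℤ} (hx : x = ∑ t, C t • S.α t)
    (hC : ∀ t, 0 ≤ C t) : S.posX x := by
  refine ⟨fun t => (C t).toNat, ?_⟩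
  rw [hx]
  congr 1
  funext t
  rw [Int.toNat_of_nonneg (hC t)]

lemma sub_smul_coords {β : S.X} {c : I → ℤ} (hc : β = ∑ t, c t • S.α t) (i : I) (m : ℤ) :
    S.α i - m • β = ∑ t, ((if t = i then 1 else 0) - m * c t) • S.α t := by
  rw [hc, S.alpha_coords i, Finset.smul_sum, ← Finset.sum_sub_distrib]
  congr 1
  funext t
  rw [smul_smul, ← sub_smul]

/-- A positive root other than `α i` has some positive coefficient away from `i`. -/
lemma pos_root_support {β : S.X} (i : I) (hR : S.IsRoot β) (hpos : S.posX β)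
    (hne : β ≠ S.α i) :
    ∃ c : I → ℕ, β = ∑ t, (c t : ℤ) • S.α t ∧ ∃ t, t ≠ i ∧ 1 ≤ c t := by
  obtain ⟨c, hc⟩ := hpos
  refine ⟨c, hc, ?_⟩
  by_contra hall
  push_neg at hall
  have hz : ∀ t, t ≠ i → c t = 0 := by
    intro t ht; have := hall t ht; omega
  have hβ : β = (c i : ℤ) • S.α i := by
    rw [hc]
    rw [Finset.sum_eq_single_of_mem i (Finset.mem_univ i)]
    intro t _ ht
    rw [hz t ht]
    simp
  have hci : 1 ≤ (c i : ℤ) := by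
    rcases Nat.eq_zero_or_pos (c i) with h | h
    · exfalso
      apply S.root_nonzero hR
      rw [hβ, h]
      simp
    · omega
  exact hne (S.pos_root_alpha hR hci hβ)

/-- `α i - m • β` is never positive when `m ≥ 1` and `β` is a positive root `≠ α i`. -/
lemma neg_of_sub (i : I) {β : S.X} (m : ℤ) (hm : 1 ≤ m) (hR : S.IsRoot β)
    (hpos : S.posX β) (hne : β ≠ S.α i) : ¬ S.posX (S.α i - m • β) := by
  intro hq
  obtain ⟨c, hc, t₀, ht₀i, ht₀⟩ := S.pos_root_support i hR hpos hne
  have hcoords := S.sub_smul_coords (c := fun t => (c t : ℤ)) hc i m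
  have := S.posX_coords hq hcoords t₀
  rw [if_neg ht₀i] at this
  nlinarith [this]

lemma sReflX_eq_word {β : S.X} (hR : S.IsRoot β) (x : S.X) :
    S.sReflX β x = S.wordX (hR.choose.1 ++ [hR.choose.2] ++ hR.choose.1.reverse) x := by
  rw [sReflX, dif_pos hR]
  have h1 : (S.wordX hR.choose.1 * S.reflX hR.choose.2 * (S.wordX hR.choose.1)⁻¹) x
      = S.wordX hR.choose.1 (S.reflX hR.choose.2 (S.wordX hR.choose.1.reverse x)) := by
    rw [← S.wordX_inv_apply]
    rfl
  rw [h1, S.wordX_append (hR.choose.1 ++ [hR.choose.2]) hR.choose.1.reverse,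
    S.wordX_append hR.choose.1 [hR.choose.2]]
  rfl

lemma isRoot_sReflX {β γ : S.X} (hRβ : S.IsRoot β) (hRγ : S.IsRoot γ) :
    S.IsRoot (S.sReflX β γ) := by
  obtain ⟨⟨l, j⟩, hl⟩ := id hRγ
  rw [S.sReflX_eq_word hRβ, hl, ← S.wordX_append]
  exact S.isRoot_word _ j

lemma sReflX_invol {β : S.X} (hR : S.IsRoot β) (x : S.X) :
    S.sReflX β (S.sReflX β x) = x := by
  rw [S.sReflX_apply hR, S.sReflX_apply hR]
  have h1 : S.P (S.coroot β) (x - S.P (S.coroot β) x • β) = -(S.P (S.coroot β) x) := by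
    rw [map_sub, map_smul, S.coroot_pair_self hR, smul_eq_mul]
    ring
  rw [h1]
  module

lemma smul_alpha_coords {β : S.X} {c : I → ℤ} (hc : β = ∑ t, c t • S.α t) (i : I) (m : ℤ) :
    β - m • S.α i = ∑ t, (c t - m * (if t = i then 1 else 0)) • S.α t := by
  rw [hc, S.alpha_coords i, Finset.smul_sum, ← Finset.sum_sub_distrib]
  congr 1
  funext t
  rw [smul_smul, ← sub_smul]

/-- The reflection permutes the positive roots other than `α i` (on the `reflX` level). -/
lemma perm_pos (i : I) {β : S.X} (hR : S.IsRoot β) (hpos : S.posX β) (hne : β ≠ S.α i) :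
    S.posX (S.reflX i β) := by
  rcases S.root_pos_or_neg (S.isRoot_reflX i hR) with h | h
  · exact h
  exfalso
  obtain ⟨c, hc, t₀, ht₀i, ht₀⟩ := S.pos_root_support i hR hpos hne
  set a := S.P (S.αv i) β with ha
  have hcoords : S.reflX i β = ∑ t, ((c t : ℤ) - a * (if t = i then 1 else 0)) • S.α t := by
    rw [S.reflX_apply, ← ha]
    exact S.smul_alpha_coords hc i a
  have hco := S.posX_coords h (S.neg_coords hcoords) t₀
  rw [if_neg ht₀i] at hco
  omega

lemma perm_neg (i : I) {β : S.X} (hR : S.IsRoot β) (hneg : S.posX (-β))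
    (hne : β ≠ -S.α i) : S.posX (-(S.reflX i β)) := by
  have h1 : S.posX (S.reflX i (-β)) := by
    apply S.perm_pos i (S.isRoot_neg hR) hneg
    intro hcon
    apply hne
    rw [← neg_neg β, hcon]
  rwa [map_neg] at h1

end KMD

namespace KMD

open scoped Classical

variable {I : Type} [Fintype I] [DecidableEq I]

/-- For a quantum root `β` and a simple reflection `r_i`, `r_i(β)` is quantum iff
`|⟨β∨, α_i⟩| ≤ 1`. -/
theorem reflect_quantum_iff (S : KMD I) (β : S.X) (i : I) (hβ : S.IsQuantum β) :
    S.IsQuantum (S.reflX i β) ↔ |S.P (S.coroot β) (S.α i)| ≤ 1 := by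
  obtain ⟨⟨hRβ, hposβ⟩, hquant⟩ := hβ
  set c := S.coroot β with hc
  set t := S.P c (S.α i) with ht
  have h2β : S.P c β = 2 := S.coroot_pair_self hRβ
  by_cases hβi : β = S.α i
  · constructor
    · intro hq'
      exfalso
      have h1 := hq'.1.2
      rw [hβi, S.reflX_alpha_self] at h1
      exact S.not_pos_and_neg (S.isRoot_alpha i) (S.posX_alpha i) h1
    · intro hle
      exfalso
      have hco : c = S.αv i := by
        rw [hc, hβi]
        exact S.coroot_eq (S.isRoot_alpha i) (S.wordX_nil (S.α i)).symm
      rw [ht, hco, S.pair_simple, S.A_diag] at hle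
      norm_num at hle
  have hαβ : S.α i ≠ β := fun h => hβi h.symm
  set β' := S.reflX i β with hβ'
  have hRβ' : S.IsRoot β' := S.isRoot_reflX i hRβ
  have hposβ' : S.posX β' := S.perm_pos i hRβ hposβ hβi
  have hβ'i : β' ≠ S.α i := by
    intro h
    have h1 := congrArg (S.reflX i) h
    rw [hβ', S.reflX_invol, S.reflX_alpha_self] at h1
    rw [h1] at hposβ
    exact S.not_pos_and_neg (S.isRoot_alpha i) (S.posX_alpha i) hposβ
  have hcor' : S.coroot β' = S.reflY i c := by
    obtain ⟨⟨l, j⟩, hl⟩ := id hRβ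
    have h1 : β' = S.wordX (i :: l) (S.α j) := by
      rw [hβ', hl]; rfl
    rw [S.coroot_eq hRβ' h1]
    show S.reflY i (S.wordY l (S.αv j)) = _
    rw [hc, S.coroot_eq hRβ hl]
  have hP' : ∀ x, S.P (S.coroot β') x = S.P c (S.reflX i x) := by
    intro x
    rw [hcor', S.pair_reflY]
  have ht' : S.P (S.coroot β') (S.α i) = -t := by
    rw [hP', S.reflX_alpha_self, map_neg, ht]
  have hs : ∀ x, S.sReflX β x = x - S.P c x • β := fun x => S.sReflX_apply hRβ x
  have hs' : ∀ x, S.sReflX β' x = x - S.P c (S.reflX i x) • β' := by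
    intro x
    rw [S.sReflX_apply hRβ', hP']
  have hval' : S.sReflX β' (S.α i) = S.α i - (-t) • β' := by
    rw [ht, hs' (S.α i), S.reflX_alpha_self, map_neg]
  constructor
  · intro hq'
    by_contra habs
    have h2 : t ≤ -2 ∨ 2 ≤ t := by
      by_contra hcon
      push_neg at hcon
      apply habs
      rw [abs_le]
      omega
    rcases h2 with hneg2 | hpos2
    · -- t ≤ -2 : test quantum condition of β' at α i
      have hsrt : S.IsRoot (S.sReflX β' (S.α i)) := S.isRoot_sReflX hRβ' (S.isRoot_alpha i)
      have hmem : S.α i ∈ S.InvSet (S.sReflX β') := by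
        refine ⟨⟨S.isRoot_alpha i, S.posX_alpha i⟩, ?_⟩
        rw [S.isNegRoot_iff]
        refine ⟨hsrt, ?_⟩
        rcases S.root_pos_or_neg hsrt with h | h
        · exfalso
          rw [hval'] at h
          exact S.neg_of_sub i (-t) (by omega) hRβ' hposβ' hβ'i h
        · exact h
      have hv := hq'.2 (S.α i) hmem (Ne.symm hβ'i)
      rw [ht'] at hv
      omega
    · -- 2 ≤ t : test quantum condition of β at α i
      have hsrt : S.IsRoot (S.sReflX β (S.α i)) := S.isRoot_sReflX hRβ (S.isRoot_alpha i)
      have hval : S.sReflX β (S.α i) = S.α i - t • β := by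
        rw [ht, hs (S.α i)]
      have hmem : S.α i ∈ S.InvSet (S.sReflX β) := by
        refine ⟨⟨S.isRoot_alpha i, S.posX_alpha i⟩, ?_⟩
        rw [S.isNegRoot_iff]
        refine ⟨hsrt, ?_⟩
        rcases S.root_pos_or_neg hsrt with h | h
        · exfalso
          rw [hval] at h
          exact S.neg_of_sub i t (by omega) hRβ hposβ hβi h
        · exact h
      have hv := hquant (S.α i) hmem hαβ
      rw [← ht] at hv
      omega
  · intro hle
    refine ⟨⟨hRβ', hposβ'⟩, ?_⟩
    intro γ' hmem hne'
    obtain ⟨⟨hγ'R, hγ'pos⟩, hγ'negR⟩ := hmem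
    rw [S.isNegRoot_iff] at hγ'negR
    obtain ⟨hsγ'R, hsγ'neg⟩ := hγ'negR
    by_cases hγ'αi : γ' = S.α i
    · have htle : t ≤ -1 := by
        by_contra hpos0
        push_neg at hpos0
        apply S.not_pos_and_neg hsγ'R ?_ hsγ'neg
        rw [hγ'αi, hval']
        obtain ⟨cb, hcb⟩ := hposβ'
        apply S.posX_of_coords (S.sub_smul_coords (c := fun s => ((cb s : ℤ))) hcb i (-t))
        intro s
        have : (0:ℤ) ≤ (cb s : ℤ) := by positivity
        have ht0 : 0 ≤ t := by omega
        by_cases hsi : s = i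
        · rw [if_pos hsi]; nlinarith
        · rw [if_neg hsi]; nlinarith
      have hteq : t = -1 := by
        have := abs_le.mp hle
        omega
      rw [hγ'αi, ht', hteq]
      norm_num
    · set γ := S.reflX i γ' with hγ
      have hγR : S.IsRoot γ := S.isRoot_reflX i hγ'R
      have hγpos : S.posX γ := S.perm_pos i hγ'R hγ'pos hγ'αi
      have hrel : S.reflX i (S.sReflX β' γ') = S.sReflX β γ := by
        rw [hs' γ', hs γ, map_sub, map_smul]
        rw [hβ', S.reflX_invol, ← hγ]
      have hvalue : S.P (S.coroot β') γ' = S.P c γ := by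
        rw [hP' γ', ← hγ]
      by_cases hsneg : S.sReflX β' γ' = -S.α i
      · have hγval : γ = S.α i - t • β := by
          have h1 : S.sReflX β γ = S.α i := by
            rw [← hrel, hsneg, map_neg, S.reflX_alpha_self, neg_neg]
          have h2 := congrArg (S.sReflX β) h1
          rw [S.sReflX_invol hRβ] at h2
          rw [h2, ht, hs (S.α i)]
        have ht0 : t ≠ 0 := by
          intro h0
          rw [h0, zero_smul, sub_zero] at hγval
          have hγ'eq : γ' = -S.α i := by
            have h4 : S.reflX i γ = γ' := by rw [hγ, S.reflX_invol]
            rw [← h4, hγval, S.reflX_alpha_self]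
          rw [hγ'eq] at hγ'pos
          exact S.not_pos_and_neg (S.isRoot_alpha i) (S.posX_alpha i) hγ'pos
        have ht1 : t ≠ 1 := by
          intro h1
          rw [h1, one_smul] at hγval
          apply S.neg_of_sub i 1 le_rfl hRβ hposβ hβi
          rw [one_smul, ← hγval]
          exact hγpos
        have hteq : t = -1 := by
          have := abs_le.mp hle
          omega
        rw [hvalue, hγval, map_sub, map_smul, ← ht, h2β, smul_eq_mul, hteq]
        ring
      · have hsγneg : S.posX (-(S.sReflX β γ)) := by
          rw [← hrel]
          exact S.perm_neg i hsγ'R hsγ'neg hsneg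
        have hγβ : γ ≠ β := by
          intro h
          apply hne'
          have h4 : S.reflX i γ = γ' := by rw [hγ, S.reflX_invol]
          rw [← h4, h]
        have hmemγ : γ ∈ S.InvSet (S.sReflX β) :=
          ⟨⟨hγR, hγpos⟩, by
            rw [S.isNegRoot_iff]
            exact ⟨S.isRoot_sReflX hRβ hγR, hsγneg⟩⟩
        have hv := hquant γ hmemγ hγβ
        rw [hvalue, hv]

end KMD
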